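/- (Lee's Lemma, part 1) Let T be a finite tree with node set N and edge set E, let V be a finite set of variables, and let χ : N → 2^V assign a bag of variables to each node such that the running intersection property holds: for every x ∈ V, the set of nodes t with x ∈ χ(t) induces a connected subtree of T. Let h : 2^V → ℝ be a polymatroid. Then Σ_{t ∈ N} h(χ(t)) − Σ_{(t1,t2) ∈ E} h(χ(t1) ∩ χ(t2)) ≥ h(⋃_{t ∈ N} χ(t)). -/
import Mathlib



open SimpleGraph Finset

section graph
variable {N : Type*} [DecidableEq N] {G : SimpleGraph N} (r : N)

private lemma lee_not_mem_support {a b : N} (p : G.Walk r a)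
    (hp : p.length = G.dist r a) (hb : G.dist r a < G.dist r b) : b ∉ p.support := by
  intro hmem
  have h1 : G.dist r b ≤ (p.takeUntil b hmem).length := SimpleGraph.dist_le _
  have h2 := p.length_takeUntil_le hmem
  omega

private lemma lee_dist_ne (hT : G.IsTree) {a b : N} (hab : G.Adj a b) :
    G.dist r a ≠ G.dist r b := by
  intro heq
  have hconn := hT.isConnected
  obtain ⟨p, hp, hlen⟩ := hconn.exists_path_of_dist r a
  have hba : b ∉ p.support := by
    intro hmem
    have h1 : G.dist r b ≤ (p.takeUntil b hmem).length := SimpleGraph.dist_le _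
    have h2 : G.dist b a ≤ (p.dropUntil b hmem).length := SimpleGraph.dist_le _
    have h3 : G.dist b a = 1 := SimpleGraph.dist_eq_one_iff_adj.2 hab.symm
    have h4 : (p.takeUntil b hmem).length + (p.dropUntil b hmem).length = p.length := by
      have := congrArg SimpleGraph.Walk.length (p.take_spec hmem)
      rwa [SimpleGraph.Walk.length_append] at this
    omega
  set W : G.Walk b r := SimpleGraph.Walk.cons hab.symm p.reverse with hW
  have hWp : W.IsPath := by
    rw [hW, SimpleGraph.Walk.cons_isPath_iff]
    exact ⟨hp.reverse, by simpa [SimpleGraph.Walk.support_reverse] using hba⟩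
  obtain ⟨q, hq, hqlen⟩ := hconn.exists_path_of_dist r b
  have := (hT.existsUnique_path b r).unique hWp hq.reverse
  have hlenW : W.length = p.length + 1 := by
    simp [hW, SimpleGraph.Walk.length_reverse]
  rw [this] at hlenW
  rw [SimpleGraph.Walk.length_reverse] at hlenW
  omega

private lemma lee_parent_unique (hT : G.IsTree) {a a' b : N} (h1 : G.Adj a b) (h2 : G.Adj a' b)
    (e1 : G.dist r a + 1 = G.dist r b) (e2 : G.dist r a' + 1 = G.dist r b) : a = a' := by
  have hconn := hT.isConnected
  obtain ⟨p, hp, hlen⟩ := hconn.exists_path_of_dist r a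
  obtain ⟨p', hp', hlen'⟩ := hconn.exists_path_of_dist r a'
  have hb : b ∉ p.support := lee_not_mem_support r p hlen (by omega)
  have hb' : b ∉ p'.support := lee_not_mem_support r p' hlen' (by omega)
  set W : G.Walk b r := SimpleGraph.Walk.cons h1.symm p.reverse with hW
  set W' : G.Walk b r := SimpleGraph.Walk.cons h2.symm p'.reverse with hW'
  have hWp : W.IsPath := by
    rw [hW, SimpleGraph.Walk.cons_isPath_iff]
    exact ⟨hp.reverse, by simpa [SimpleGraph.Walk.support_reverse] using hb⟩
  have hWp' : W'.IsPath := by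
    rw [hW', SimpleGraph.Walk.cons_isPath_iff]
    exact ⟨hp'.reverse, by simpa [SimpleGraph.Walk.support_reverse] using hb'⟩
  have heq := (hT.existsUnique_path b r).unique hWp hWp'
  have hsupp := congrArg SimpleGraph.Walk.support heq
  rw [hW, hW', SimpleGraph.Walk.support_cons, SimpleGraph.Walk.support_cons,
    p.reverse.support_eq_cons, p'.reverse.support_eq_cons] at hsupp
  simp only [List.cons.injEq] at hsupp
  exact hsupp.2.1

end graph

section graph2
variable {N : Type*} [DecidableEq N] {G : SimpleGraph N} (r : N)

private lemma lee_parent_exists (hT : G.IsTree) {t : N} (ht : t ≠ r) :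
    ∃ a, G.Adj a t ∧ G.dist r a + 1 = G.dist r t := by
  have hconn := hT.isConnected
  obtain ⟨p, hp, hlen⟩ := hconn.exists_path_of_dist r t
  have hpos : 0 < G.dist r t := hconn.pos_dist_of_ne (Ne.symm ht)
  have hnn : ¬ p.reverse.Nil := by
    rw [SimpleGraph.Walk.not_nil_iff_lt_length, SimpleGraph.Walk.length_reverse]
    omega
  obtain ⟨u, hadj, q, hq⟩ := SimpleGraph.Walk.not_nil_iff.1 hnn
  refine ⟨u, hadj.symm, ?_⟩
  have h1 : G.dist r u ≤ q.length := by
    have := SimpleGraph.dist_le q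
    rwa [SimpleGraph.dist_comm] at this
  have h2 : q.length + 1 = p.length := by
    have := congrArg SimpleGraph.Walk.length hq
    rw [SimpleGraph.Walk.length_reverse, SimpleGraph.Walk.length_cons] at this
    omega
  have hut : G.dist u t = 1 := SimpleGraph.dist_eq_one_iff_adj.2 hadj.symm
  have h3 : G.dist r t ≤ G.dist r u + G.dist u t := hconn.dist_triangle
  omega

end graph2

section tele
variable {N V : Type*} [DecidableEq N] [DecidableEq V]

private lemma lee_tele (r : N) (χ : N → Finset V) (h : Finset V → ℝ)
    (h0 : h ∅ = 0)
    (hmono : ∀ U U' : Finset V, U ⊆ U' → h U ≤ h U')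
    (hsub : ∀ U U' : Finset V, h (U ∪ U') + h (U ∩ U') ≤ h U + h U')
    (par : N → N) (d : N → ℕ) (hdr : d r = 0)
    (hpar : ∀ t, t ≠ r → d (par t) < d t) :
    ∀ S : Finset N, (∀ t ∈ S, t ≠ r → par t ∈ S) →
      h (S.sup χ) + ∑ t ∈ S.erase r, h (χ t ∩ χ (par t)) ≤ ∑ t ∈ S, h (χ t) := by
  intro S
  induction S using Finset.strongInduction with
  | _ S ih =>
    intro hclosed
    rcases S.eq_empty_or_nonempty with rfl | hne
    · simp [h0]
    obtain ⟨t, htS, htmax⟩ := S.exists_max_image d hne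
    by_cases htr : t = r
    · subst htr
      have hS : S = {t} := by
        apply Finset.eq_singleton_iff_nonempty_unique_mem.2 ⟨hne, ?_⟩
        intro u huS
        by_contra hu
        have := hpar u hu
        have := htmax u huS
        omega
      subst hS
      simp [hdr]
    · -- t is not the root
      set S' := S.erase t with hS'
      have hparS : par t ∈ S' := by
        refine Finset.mem_erase.2 ⟨?_, hclosed t htS htr⟩
        have := hpar t htr
        intro he; rw [he] at this; omega
      have hclosed' : ∀ u ∈ S', u ≠ r → par u ∈ S' := by
        intro u huS' hur
        have huS := Finset.mem_of_mem_erase huS'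
        refine Finset.mem_erase.2 ⟨?_, hclosed u huS hur⟩
        intro he
        have h1 := hpar u hur
        have h2 := htmax u huS
        rw [he] at h1
        omega
      have hIH := ih S' (Finset.erase_ssubset htS) hclosed'
      -- sup decomposition
      have hsup : S.sup χ = χ t ⊔ S'.sup χ := by
        rw [hS', ← Finset.sup_insert, Finset.insert_erase htS]
      -- sum over S
      have hsum : ∑ u ∈ S, h (χ u) = h (χ t) + ∑ u ∈ S', h (χ u) := by
        rw [hS', ← Finset.add_sum_erase S _ htS]
      -- erase r sum
      have htSr : t ∈ S.erase r := Finset.mem_erase.2 ⟨htr, htS⟩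
      have hsum2 : ∑ u ∈ S.erase r, h (χ u ∩ χ (par u))
          = h (χ t ∩ χ (par t)) + ∑ u ∈ S'.erase r, h (χ u ∩ χ (par u)) := by
        rw [← Finset.add_sum_erase _ _ htSr, hS', Finset.erase_right_comm]
      have hkey := hsub (S'.sup χ) (χ t)
      have hm : h (χ t ∩ χ (par t)) ≤ h (S'.sup χ ∩ χ t) := by
        apply hmono
        intro x hx
        rw [Finset.mem_inter] at hx ⊢
        refine ⟨?_, hx.1⟩
        exact (Finset.le_sup (f := χ) hparS : χ (par t) ⊆ S'.sup χ) hx.2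
      have hsupm : h (S.sup χ) = h (S'.sup χ ∪ χ t) := by
        rw [hsup, Finset.sup_eq_union, Finset.union_comm]
      rw [hsum, hsum2]
      linarith

end tele

/-- Lee's Lemma, part 1: given a finite tree `G` on node set `N`, bags
`χ : N → Finset V` satisfying the running intersection property (for every variable
`x`, the nodes whose bag contains `x` induce a connected subgraph), and a polymatroid
`h` (zero on `∅`, monotone, and submodular), we have
`Σ_{t ∈ N} h(χ(t)) − Σ_{(t1,t2) ∈ E} h(χ(t1) ∩ χ(t2)) ≥ h(⋃_{t ∈ N} χ(t))`. -/
theorem lee_lemma {N V : Type*} [Fintype N] [DecidableEq N] [DecidableEq V]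
    (G : SimpleGraph N) [DecidableRel G.Adj] (hT : G.IsTree)
    (χ : N → Finset V)
    (hRIP : ∀ x : V, (G.induce {t | x ∈ χ t}).Preconnected)
    (h : Finset V → ℝ)
    (h0 : h ∅ = 0)
    (hmono : ∀ U U' : Finset V, U ⊆ U' → h U ≤ h U')
    (hsub : ∀ U U' : Finset V, h (U ∪ U') + h (U ∩ U') ≤ h U + h U') :
    h (Finset.univ.sup χ)
      ≤ ∑ t, h (χ t)
        - ∑ e ∈ G.edgeFinset,
            Sym2.lift
              ⟨fun t1 t2 => h (χ t1 ∩ χ t2),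
               fun t1 t2 => by simp only [Finset.inter_comm]⟩ e := by
  classical
  obtain ⟨r⟩ := hT.isConnected.nonempty
  have hpar : ∀ t : N, ∃ a : N, t ≠ r → G.Adj a t ∧ G.dist r a + 1 = G.dist r t := by
    intro t
    by_cases ht : t = r
    · exact ⟨r, fun hc => absurd ht hc⟩
    · obtain ⟨a, h1, h2⟩ := lee_parent_exists r hT ht
      exact ⟨a, fun _ => ⟨h1, h2⟩⟩
  choose par hparspec using hpar
  have hlt : ∀ t, t ≠ r → G.dist r (par t) < G.dist r t := by
    intro t ht
    have := (hparspec t ht).2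
    omega
  have htel := lee_tele r χ h h0 hmono hsub par (fun t => G.dist r t)
    (by simp) hlt Finset.univ (by simp)
  have hedge : ∑ t ∈ Finset.univ.erase r, h (χ t ∩ χ (par t))
      = ∑ e ∈ G.edgeFinset,
          Sym2.lift
            ⟨fun t1 t2 => h (χ t1 ∩ χ t2),
             fun t1 t2 => by simp only [Finset.inter_comm]⟩ e := by
    apply Finset.sum_bij (fun t _ => s(t, par t))
    · intro t ht
      rw [SimpleGraph.mem_edgeFinset, SimpleGraph.mem_edgeSet]
      exact ((hparspec t (Finset.mem_erase.1 ht).1).1).symm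
    · intro t1 ht1 t2 ht2 heq
      rcases Sym2.eq_iff.1 heq with ⟨h1, _⟩ | ⟨h1, h2⟩
      · exact h1
      · have e1 := (hparspec t1 (Finset.mem_erase.1 ht1).1).2
        have e2 := (hparspec t2 (Finset.mem_erase.1 ht2).1).2
        rw [h2] at e1
        rw [← h1] at e2
        omega
    · intro e he
      revert he
      refine Sym2.ind (fun a b => ?_) e
      intro he
      · have hab : G.Adj a b := (SimpleGraph.mem_edgeSet G).1 (SimpleGraph.mem_edgeFinset.1 he)
        have hne := lee_dist_ne r hT hab
        have htri1 : G.dist r b ≤ G.dist r a + 1 := by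
          have h1 : G.dist a b = 1 := SimpleGraph.dist_eq_one_iff_adj.2 hab
          have := hT.isConnected.dist_triangle (u := r) (v := a) (w := b)
          omega
        have htri2 : G.dist r a ≤ G.dist r b + 1 := by
          have h1 : G.dist b a = 1 := SimpleGraph.dist_eq_one_iff_adj.2 hab.symm
          have := hT.isConnected.dist_triangle (u := r) (v := b) (w := a)
          omega
        rcases lt_or_gt_of_ne hne with hlt' | hlt'
        · -- dist r a < dist r b, so a = par b
          have hbr : b ≠ r := by
            intro hc; subst hc; simp [SimpleGraph.dist_self] at hlt'
          have hspec := hparspec b hbr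
          have : a = par b := lee_parent_unique r hT hab hspec.1 (by omega) hspec.2
          exact ⟨b, Finset.mem_erase.2 ⟨hbr, Finset.mem_univ b⟩, by rw [← this, Sym2.eq_swap]⟩
        · have har : a ≠ r := by
            intro hc; subst hc; simp [SimpleGraph.dist_self] at hlt'
          have hspec := hparspec a har
          have : b = par a := lee_parent_unique r hT hab.symm hspec.1 (by omega) hspec.2
          exact ⟨a, Finset.mem_erase.2 ⟨har, Finset.mem_univ a⟩, by rw [← this]⟩
    · intro t ht
      simp
  linarith [htel, hedge]
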